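/- Let V be a finite-dimensional complex vector space with a nondegenerate symmetric or symplectic bilinear form b, and let x be a nilpotent endomorphism of V lying in the Lie algebra of the symmetry group of b (i.e., b(xu, v) + b(u, xv) = 0). For each d ≥ 1 let V_d = image of x^d. Then the bilinear form b_d on V_d defined by b_d(x^d(u), x^d(v)) = b(u, x^d(v)) is well-defined and nondegenerate; moreover b_d is symmetric if b_{d−1} is symplectic and symplectic if b_{d−1} is symmetric. -/
import Mathlib


/-- Let `V` be a finite-dimensional complex vector space with a nondegenerate
symmetric or symplectic bilinear form `b`, and `x` a nilpotent endomorphism of `V` with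
`b(xu,v) + b(u,xv) = 0`.  For `d ≥ 1` let `V_d = range x^d`.  Then the bilinear form `b_d` on
`V_d` defined by `b_d(x^d u, x^d v) = b(u, x^d v)` is well-defined (it exists and is unique),
is nondegenerate, and `b_d` is symmetric if `b_{d-1}` is symplectic and symplectic (skew) if
`b_{d-1}` is symmetric. -/
theorem induced_form_on_image_of_nilpotent
    (V : Type*) [AddCommGroup V] [Module ℂ V] [FiniteDimensional ℂ V]
    (b : V →ₗ[ℂ] V →ₗ[ℂ] ℂ)
    (hb_nondeg : ∀ u : V, (∀ v : V, b u v = 0) → u = 0)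
    (hb_refl : (∀ u v : V, b u v = b v u) ∨ (∀ u v : V, b u v = - b v u))
    (x : Module.End ℂ V)
    (hx_nil : IsNilpotent x)
    (hx_skew : ∀ u v : V, b (x u) v + b u (x v) = 0)
    (d : ℕ) (hd : 1 ≤ d) :
    -- existence and uniqueness (well-definedness) of b_d
    (∃! bd : ↥(LinearMap.range (x ^ d)) →ₗ[ℂ] ↥(LinearMap.range (x ^ d)) →ₗ[ℂ] ℂ,
      ∀ u v : V,
        bd ⟨(x ^ d) u, LinearMap.mem_range_self _ u⟩ ⟨(x ^ d) v, LinearMap.mem_range_self _ v⟩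
          = b u ((x ^ d) v)) ∧
    -- nondegeneracy and the symmetric/symplectic alternation, for b_d and b_{d-1}
    (∀ (bd : ↥(LinearMap.range (x ^ d)) →ₗ[ℂ] ↥(LinearMap.range (x ^ d)) →ₗ[ℂ] ℂ)
       (bd' : ↥(LinearMap.range (x ^ (d - 1))) →ₗ[ℂ] ↥(LinearMap.range (x ^ (d - 1))) →ₗ[ℂ] ℂ),
      (∀ u v : V,
        bd ⟨(x ^ d) u, LinearMap.mem_range_self _ u⟩ ⟨(x ^ d) v, LinearMap.mem_range_self _ v⟩
          = b u ((x ^ d) v)) →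
      (∀ u v : V,
        bd' ⟨(x ^ (d - 1)) u, LinearMap.mem_range_self _ u⟩
            ⟨(x ^ (d - 1)) v, LinearMap.mem_range_self _ v⟩ = b u ((x ^ (d - 1)) v)) →
      ((∀ w : ↥(LinearMap.range (x ^ d)), (∀ w' , bd w w' = 0) → w = 0) ∧
       ((∀ w w', bd' w w' = - bd' w' w) → (∀ w w', bd w w' = bd w' w)) ∧
       ((∀ w w', bd' w w' = bd' w' w) → (∀ w w', bd w w' = - bd w' w)))) := by
  -- sign lemma
  have key : ∀ (k : ℕ) (u v : V), b ((x ^ k) u) v = (-1 : ℂ) ^ k * b u ((x ^ k) v) := by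
    intro k
    induction k with
    | zero => intro u v; simp
    | succ k ih =>
      intro u v
      have h1 : (x ^ (k + 1)) u = (x ^ k) (x u) := by rw [pow_succ]; rfl
      have h2 : (x ^ (k + 1)) v = x ((x ^ k) v) := by rw [pow_succ']; rfl
      have h3 : b (x u) ((x ^ k) v) = - b u (x ((x ^ k) v)) :=
        eq_neg_of_add_eq_zero_left (hx_skew u _)
      rw [h1, ih, h3, h2]; ring
  have hker : ∀ u : V, (x ^ d) u = 0 → ∀ w : ↥(LinearMap.range (x ^ d)), b u (w : V) = 0 := by
    rintro u hu ⟨-, v, rfl⟩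
    have h2 : (-1 : ℂ) ^ d * b u ((x ^ d) v) = 0 := by
      rw [← key d u v, hu]; simp
    exact (mul_eq_zero.mp h2).resolve_left (by simp)
  -- existence
  set f : V →ₗ[ℂ] V := (x ^ d : Module.End ℂ V) with hf
  have hmem : ∀ u : V, (x ^ d) u ∈ LinearMap.range (x ^ d) := fun u =>
    LinearMap.mem_range_self _ u
  let φ : V →ₗ[ℂ] ↥(LinearMap.range (x ^ d)) →ₗ[ℂ] ℂ :=
    b.compl₂ (Submodule.subtype (LinearMap.range (x ^ d)))
  have hφker : LinearMap.ker f ≤ LinearMap.ker φ := by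
    intro u hu
    rw [LinearMap.mem_ker] at hu ⊢
    ext w
    exact hker u hu w
  let bd0 : ↥(LinearMap.range (x ^ d)) →ₗ[ℂ] ↥(LinearMap.range (x ^ d)) →ₗ[ℂ] ℂ :=
    (Submodule.liftQ (LinearMap.ker f) φ hφker).comp f.quotKerEquivRange.symm.toLinearMap
  have hbd0 : ∀ u v : V,
      bd0 ⟨(x ^ d) u, LinearMap.mem_range_self _ u⟩ ⟨(x ^ d) v, LinearMap.mem_range_self _ v⟩
        = b u ((x ^ d) v) := by
    intro u v
    have hsymm : f.quotKerEquivRange.symm ⟨(x ^ d) u, LinearMap.mem_range_self _ u⟩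
        = Submodule.Quotient.mk u := f.quotKerEquivRange_symm_apply_image u _
    simp only [bd0, LinearMap.comp_apply, LinearEquiv.coe_coe, hsymm, Submodule.liftQ_apply]
    rfl
  refine ⟨⟨bd0, hbd0, ?_⟩, ?_⟩
  · -- uniqueness
    intro bd hbd
    apply LinearMap.ext
    rintro ⟨-, u, rfl⟩
    apply LinearMap.ext
    rintro ⟨-, v, rfl⟩
    rw [show (⟨(x ^ d) u, ⟨u, rfl⟩⟩ : ↥(LinearMap.range (x ^ d)))
        = ⟨(x ^ d) u, LinearMap.mem_range_self _ u⟩ from rfl,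
      show (⟨(x ^ d) v, ⟨v, rfl⟩⟩ : ↥(LinearMap.range (x ^ d)))
        = ⟨(x ^ d) v, LinearMap.mem_range_self _ v⟩ from rfl, hbd u v, hbd0 u v]
  · intro bd bd' hbd hbd'
    have hc1 : ∀ w : V, (x ^ (d - 1)) (x w) = (x ^ d) w := by
      intro w
      conv_rhs => rw [show d = (d - 1) + 1 from (Nat.succ_pred_eq_of_pos hd).symm, pow_succ]
      rfl
    have hc2 : ∀ w : V, x ((x ^ (d - 1)) w) = (x ^ d) w := by
      intro w
      conv_rhs => rw [show d = (d - 1) + 1 from (Nat.succ_pred_eq_of_pos hd).symm, pow_succ']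
      rfl
    -- key computation relating bd and bd'
    have hAB : ∀ u v : V,
        bd ⟨(x ^ d) u, LinearMap.mem_range_self _ u⟩ ⟨(x ^ d) v, LinearMap.mem_range_self _ v⟩
          = - bd' ⟨(x ^ (d - 1)) (x u), LinearMap.mem_range_self _ (x u)⟩
              ⟨(x ^ (d - 1)) v, LinearMap.mem_range_self _ v⟩ := by
      intro u v
      rw [hbd u v, hbd' (x u) v]
      have h3 : b (x u) ((x ^ (d - 1)) v) = - b u (x ((x ^ (d - 1)) v)) :=
        eq_neg_of_add_eq_zero_left (hx_skew u _)
      rw [h3, hc2]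
      ring
    have hBA : ∀ u v : V,
        bd ⟨(x ^ d) v, LinearMap.mem_range_self _ v⟩ ⟨(x ^ d) u, LinearMap.mem_range_self _ u⟩
          = bd' ⟨(x ^ (d - 1)) v, LinearMap.mem_range_self _ v⟩
              ⟨(x ^ (d - 1)) (x u), LinearMap.mem_range_self _ (x u)⟩ := by
      intro u v
      rw [hbd v u, hbd' v (x u), hc1]
    refine ⟨?_, ?_, ?_⟩
    · -- nondegeneracy
      rintro ⟨-, u, rfl⟩ hw
      have h0 : ∀ v : V, b u ((x ^ d) v) = 0 := by
        intro v
        rw [← hbd u v]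
        exact hw _
      have hxu : (x ^ d) u = 0 := by
        apply hb_nondeg
        intro v
        rw [key d u v, h0 v, mul_zero]
      exact Subtype.ext hxu
    · intro hs w w'
      obtain ⟨-, u, rfl⟩ := w
      obtain ⟨-, v, rfl⟩ := w'
      rw [show (⟨(x ^ d) u, ⟨u, rfl⟩⟩ : ↥(LinearMap.range (x ^ d)))
          = ⟨(x ^ d) u, LinearMap.mem_range_self _ u⟩ from rfl,
        show (⟨(x ^ d) v, ⟨v, rfl⟩⟩ : ↥(LinearMap.range (x ^ d)))
          = ⟨(x ^ d) v, LinearMap.mem_range_self _ v⟩ from rfl,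
        hAB u v, hBA u v, hs]
      ring_nf
    · intro hs w w'
      obtain ⟨-, u, rfl⟩ := w
      obtain ⟨-, v, rfl⟩ := w'
      rw [show (⟨(x ^ d) u, ⟨u, rfl⟩⟩ : ↥(LinearMap.range (x ^ d)))
          = ⟨(x ^ d) u, LinearMap.mem_range_self _ u⟩ from rfl,
        show (⟨(x ^ d) v, ⟨v, rfl⟩⟩ : ↥(LinearMap.range (x ^ d)))
          = ⟨(x ^ d) v, LinearMap.mem_range_self _ v⟩ from rfl,
        hAB u v, hBA u v, hs]
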